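/- Let $r,q\ge 1$, $n=qr+1$, $k\ge 1$, and let $T$ be a $(kn)\times r$ array satisfying: rows strictly increasing, columns weakly increasing, every value appears exactly $rk$ times, $T(kn,j)\le jq+1$ for all $j$, and $T(1,j)\ge (j-2)q+m_{j-1}+1$ for $2\le j\le r$ with fixed $1\le m_i\le q$. Fix $1\le j\le r-1$ and $3\le l\le q+1$. Let $N_{t,j+1}$ denote the number of occurrences of value $t$ in column $j+1$. Suppose $n_1\le n_2\le k(r-j)$ are nonnegative integers with $\sum_{t=2}^{l-1}N_{(j-1)q+t,\,j+1}\ge n_1$ and $\sum_{t=2}^{l}N_{(j-1)q+t,\,j+1}\le n_2$. Then $T(m,j)=(j-1)q+l$ for all $k(r(l-1)+1-j)-n_1+1\le m\le k(rl+1-j)-n_2$. -/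

import Mathlib

private lemma count_le_eq_sum' {α : Type*} (s : Finset α) (g : α → ℕ) (a b : ℕ)
    (hg : ∀ x ∈ s, a ≤ g x) :
    (s.filter (fun x => g x ≤ b)).card
      = ∑ t ∈ Finset.Icc a b, (s.filter (fun x => g x = t)).card := by
  simp only [Finset.card_filter]
  rw [Finset.sum_comm]
  apply Finset.sum_congr rfl
  intro x hx
  rw [Finset.sum_ite_eq (Finset.Icc a b) (g x) (fun _ => 1)]
  by_cases h : g x ≤ b
  · simp [Finset.mem_Icc, hg x hx, h]
  · simp [Finset.mem_Icc, h]

private lemma card_prod_filter (K R : ℕ) (f : ℕ × ℕ → Prop) [DecidablePred f] :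
    ((Finset.Icc 1 K ×ˢ Finset.Icc 1 R).filter f).card
      = ∑ c ∈ Finset.Icc 1 R, ((Finset.Icc 1 K).filter (fun i => f (i, c))).card := by
  simp only [Finset.card_filter]
  rw [Finset.sum_product]
  exact Finset.sum_comm

/-- Lemma 3.6 of the paper: a technical interval lemma for balanced standard
tableaux supported on `X^{v_m}_{w_{r,n}}`. Here
`N t c = #{rows i : T(i,c) = t}`. -/
theorem interval_lemma
    (r q : ℕ) (hr : 0 < r) (hq : 0 < q) (n : ℕ) (hn : n = q * r + 1)
    (k : ℕ) (hk : 0 < k)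
    (m : ℕ → ℕ) (hm : ∀ i : ℕ, 1 ≤ i → i ≤ r - 1 → 1 ≤ m i ∧ m i ≤ q)
    (T : ℕ → ℕ → ℕ)
    (hentries : ∀ i j : ℕ, 1 ≤ i → i ≤ k * n → 1 ≤ j → j ≤ r → 1 ≤ T i j ∧ T i j ≤ n)
    (hrows : ∀ i j : ℕ, 1 ≤ i → i ≤ k * n → 1 ≤ j → j < r → T i j < T i (j + 1))
    (hcols : ∀ i j : ℕ, 1 ≤ i → i < k * n → 1 ≤ j → j ≤ r → T i j ≤ T (i + 1) j)
    (hcount : ∀ t : ℕ, 1 ≤ t → t ≤ n →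
      (((Finset.Icc 1 (k * n)) ×ˢ (Finset.Icc 1 r)).filter
        (fun p => T p.1 p.2 = t)).card = r * k)
    (hlast : ∀ j : ℕ, 1 ≤ j → j ≤ r → T (k * n) j ≤ j * q + 1)
    (hfirst : ∀ j : ℕ, 2 ≤ j → j ≤ r → (j - 2) * q + m (j - 1) + 1 ≤ T 1 j)
    (j : ℕ) (hj1 : 1 ≤ j) (hjr : j ≤ r - 1)
    (l : ℕ) (hl1 : 3 ≤ l) (hl2 : l ≤ q + 1)
    (n1 n2 : ℕ) (hn12 : n1 ≤ n2) (hn2 : n2 ≤ k * (r - j))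
    (hN1 : n1 ≤ ∑ t ∈ Finset.Icc 2 (l - 1),
      ((Finset.Icc 1 (k * n)).filter (fun i => T i (j + 1) = (j - 1) * q + t)).card)
    (hN2 : (∑ t ∈ Finset.Icc 2 l,
      ((Finset.Icc 1 (k * n)).filter (fun i => T i (j + 1) = (j - 1) * q + t)).card) ≤ n2) :
    ∀ i : ℕ, k * (r * (l - 1) + 1 - j) - n1 + 1 ≤ i → i ≤ k * (r * l + 1 - j) - n2 →
      T i j = (j - 1) * q + l := by
  subst hn
  set K := k * (q * r + 1) with hK
  have hK1 : 1 ≤ K := by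
    have : 0 < k * (q * r + 1) := by positivity
    omega
  -- column monotonicity
  have hmono : ∀ c, 1 ≤ c → c ≤ r → ∀ i1 i2, 1 ≤ i1 → i1 ≤ i2 → i2 ≤ K → T i1 c ≤ T i2 c := by
    intro c hc1 hc2 i1 i2 h1 h12
    induction i2, h12 using Nat.le_induction with
    | base => intro _; exact le_rfl
    | succ i2 h ih =>
      intro h2
      exact (ih (by omega)).trans (hcols i2 c (by omega) (by omega) hc1 hc2)
  -- initial-segment characterization
  have hseg : ∀ c, 1 ≤ c → c ≤ r → ∀ v i, 1 ≤ i → i ≤ K →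
      (T i c ≤ v ↔ i ≤ ((Finset.Icc 1 K).filter (fun i' => T i' c ≤ v)).card) := by
    intro c hc1 hc2 v i hi1 hi2
    constructor
    · intro h
      have hsub : Finset.Icc 1 i ⊆ (Finset.Icc 1 K).filter (fun i' => T i' c ≤ v) := by
        intro x hx
        simp only [Finset.mem_Icc] at hx
        simp only [Finset.mem_filter, Finset.mem_Icc]
        exact ⟨⟨hx.1, le_trans hx.2 hi2⟩, le_trans (hmono c hc1 hc2 x i hx.1 hx.2 hi2) h⟩
      calc i = (Finset.Icc 1 i).card := by simp
        _ ≤ _ := Finset.card_le_card hsub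
    · intro h
      by_contra hv
      push_neg at hv
      have hsub : (Finset.Icc 1 K).filter (fun i' => T i' c ≤ v) ⊆ Finset.Icc 1 (i - 1) := by
        intro x hx
        simp only [Finset.mem_filter, Finset.mem_Icc] at hx
        simp only [Finset.mem_Icc]
        refine ⟨hx.1.1, ?_⟩
        by_contra hxi
        push_neg at hxi
        have := hmono c hc1 hc2 i x hi1 (by omega) hx.1.2
        omega
      have hcc := Finset.card_le_card hsub
      rw [Nat.card_Icc] at hcc
      omega
  -- column lower bounds
  have hlow : ∀ c, 2 ≤ c → c ≤ r → ∀ i, 1 ≤ i → i ≤ K → (c - 2) * q + 2 ≤ T i c := by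
    intro c hc2 hcr i hi1 hi2
    have h1 := hfirst c hc2 hcr
    have h2 := hmono c (by omega) hcr 1 i le_rfl hi1 hi2
    have hmc := hm (c - 1) (by omega) (by omega)
    omega
  -- column upper bounds
  have hup : ∀ c, 1 ≤ c → c ≤ r → ∀ i, 1 ≤ i → i ≤ K → T i c ≤ c * q + 1 := by
    intro c hc1 hcr i hi1 hi2
    have h1 := hmono c hc1 hcr i K hi1 hi2 le_rfl
    have h2 := hlast c hc1 hcr
    omega
  -- total count
  have hcount' : ∀ t, 1 ≤ t → t ≤ q * r + 1 →
      ∑ c ∈ Finset.Icc 1 r, ((Finset.Icc 1 K).filter (fun i => T i c = t)).card = r * k := by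
    intro t ht1 ht2
    have h1 := card_prod_filter K r (fun p : ℕ × ℕ => T p.1 p.2 = t)
    have h2 := hcount t ht1 ht2
    exact h1.symm.trans h2
  have hA : ∀ w, w ≤ q * r + 1 →
      ∑ c ∈ Finset.Icc 1 r, ((Finset.Icc 1 K).filter (fun i => T i c ≤ w)).card
        = w * (r * k) := by
    intro w hw
    have step1 : ∀ c ∈ Finset.Icc 1 r,
        ((Finset.Icc 1 K).filter (fun i => T i c ≤ w)).card
          = ∑ t ∈ Finset.Icc 1 w, ((Finset.Icc 1 K).filter (fun i => T i c = t)).card := by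
      intro c hc
      simp only [Finset.mem_Icc] at hc
      exact count_le_eq_sum' (Finset.Icc 1 K) (fun i => T i c) 1 w (by
        intro x hx
        simp only [Finset.mem_Icc] at hx
        exact (hentries x c hx.1 hx.2 hc.1 hc.2).1)
    rw [Finset.sum_congr rfl step1, Finset.sum_comm]
    have step2 : ∀ t ∈ Finset.Icc 1 w,
        ∑ c ∈ Finset.Icc 1 r, ((Finset.Icc 1 K).filter (fun i => T i c = t)).card = r * k := by
      intro t ht
      simp only [Finset.mem_Icc] at ht
      exact hcount' t ht.1 (le_trans ht.2 hw)
    rw [Finset.sum_congr rfl step2, Finset.sum_const, Nat.card_Icc]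
    simp [mul_comm]
  obtain ⟨j', rfl⟩ : ∃ j', j = j' + 1 := ⟨j - 1, by omega⟩
  simp only [Nat.add_sub_cancel] at hN1 hN2 ⊢
  have hjr2 : j' + 2 ≤ r := by omega
  -- split the total sum
  have hsplit : ∀ w, j' * q + 1 ≤ w → w ≤ q * r + 1 → w < j' * q + q + 2 →
      ((Finset.Icc 1 K).filter (fun i => T i (j' + 1) ≤ w)).card
        + ((Finset.Icc 1 K).filter (fun i => T i (j' + 2) ≤ w)).card
        + j' * K = w * (r * k) := by
    intro w hw1 hw2 hw3
    have htot := hA w hw2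
    have e1 : Finset.Icc 1 r = Finset.Ioc 0 r := by
      rw [← Finset.Icc_add_one_left_eq_Ioc]; rfl
    have e2 : (∑ c ∈ Finset.Ioc 0 j', ((Finset.Icc 1 K).filter (fun i => T i c ≤ w)).card)
        + ∑ c ∈ Finset.Ioc j' (j' + 2), ((Finset.Icc 1 K).filter (fun i => T i c ≤ w)).card
        = ∑ c ∈ Finset.Ioc 0 (j' + 2), ((Finset.Icc 1 K).filter (fun i => T i c ≤ w)).card :=
      Finset.sum_Ioc_consecutive _ (by omega) (by omega)
    have e3 : (∑ c ∈ Finset.Ioc 0 (j' + 2), ((Finset.Icc 1 K).filter (fun i => T i c ≤ w)).card)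
        + ∑ c ∈ Finset.Ioc (j' + 2) r, ((Finset.Icc 1 K).filter (fun i => T i c ≤ w)).card
        = ∑ c ∈ Finset.Ioc 0 r, ((Finset.Icc 1 K).filter (fun i => T i c ≤ w)).card :=
      Finset.sum_Ioc_consecutive _ (by omega) hjr2
    have h1 : ∑ c ∈ Finset.Ioc 0 j', ((Finset.Icc 1 K).filter (fun i => T i c ≤ w)).card
        = j' * K := by
      have hfull : ∀ c ∈ Finset.Ioc 0 j',
          ((Finset.Icc 1 K).filter (fun i => T i c ≤ w)).card = K := by
        intro c hc
        simp only [Finset.mem_Ioc] at hc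
        rw [Finset.filter_true_of_mem (fun i hi => by
          simp only [Finset.mem_Icc] at hi
          have h4 := hup c hc.1 (by omega) i hi.1 hi.2
          have hcq : c * q ≤ j' * q := Nat.mul_le_mul_right q hc.2
          omega)]
        rw [Nat.card_Icc]
        omega
      rw [Finset.sum_congr rfl hfull, Finset.sum_const, Nat.card_Ioc]
      simp [mul_comm]
    have h2 : ∑ c ∈ Finset.Ioc j' (j' + 2), ((Finset.Icc 1 K).filter (fun i => T i c ≤ w)).card
        = ((Finset.Icc 1 K).filter (fun i => T i (j' + 1) ≤ w)).card
          + ((Finset.Icc 1 K).filter (fun i => T i (j' + 2) ≤ w)).card := by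
      have hset : Finset.Ioc j' (j' + 2) = {j' + 1, j' + 2} := by
        ext x; simp [Finset.mem_Ioc]; omega
      rw [hset, Finset.sum_pair (by omega)]
    have h3 : ∑ c ∈ Finset.Ioc (j' + 2) r, ((Finset.Icc 1 K).filter (fun i => T i c ≤ w)).card
        = 0 := by
      apply Finset.sum_eq_zero
      intro c hc
      simp only [Finset.mem_Ioc] at hc
      rw [Finset.card_eq_zero, Finset.filter_eq_empty_iff]
      intro i hi
      simp only [Finset.mem_Icc] at hi
      have h5 := hlow c (by omega) hc.2 i hi.1 hi.2
      have hcq : (j' + 1) * q ≤ (c - 2) * q := Nat.mul_le_mul_right q (by omega)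
      have hexp : (j' + 1) * q = j' * q + q := by ring
      omega
    rw [e1] at htot
    omega
  -- column j'+2 counts
  have hlow2 : ∀ i ∈ Finset.Icc 1 K, j' * q + 2 ≤ T i (j' + 2) := by
    intro i hi
    simp only [Finset.mem_Icc] at hi
    have h6 := hlow (j' + 2) (by omega) hjr2 i hi.1 hi.2
    simp only [Nat.add_sub_cancel] at h6
    omega
  have hcolY : ∀ u, 2 ≤ u →
      ((Finset.Icc 1 K).filter (fun i => T i (j' + 2) ≤ j' * q + u)).card
        = ∑ t ∈ Finset.Icc 2 u,
            ((Finset.Icc 1 K).filter (fun i => T i (j' + 2) = j' * q + t)).card := by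
    intro u hu
    rw [count_le_eq_sum' _ (fun i => T i (j' + 2)) (j' * q + 2) (j' * q + u) hlow2]
    rw [show Finset.Icc (j' * q + 2) (j' * q + u)
        = (Finset.Icc 2 u).map (addLeftEmbedding (j' * q)) from by
      rw [Finset.map_add_left_Icc], Finset.sum_map]
    simp [addLeftEmbedding_apply]
  have hN1' : n1 ≤ ∑ t ∈ Finset.Icc 2 (l - 1),
      ((Finset.Icc 1 K).filter (fun i => T i (j' + 2) = j' * q + t)).card := hN1
  have hN2' : (∑ t ∈ Finset.Icc 2 l,
      ((Finset.Icc 1 K).filter (fun i => T i (j' + 2) = j' * q + t)).card) ≤ n2 := hN2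
  have hexp : (j' + 1) * q = j' * q + q := by ring
  have hjq : (j' + 1) * q ≤ r * q := Nat.mul_le_mul_right q (by omega)
  have hqr : q * r = r * q := by ring
  have hS2 := hsplit (j' * q + l) (by omega) (by omega) (by omega)
  have hS1 := hsplit (j' * q + (l - 1)) (by omega) (by omega) (by omega)
  have hY2 := hcolY l (by omega)
  have hY1 := hcolY (l - 1) (by omega)
  have hrl : r ≤ r * l := Nat.le_mul_of_pos_right r (by omega)
  have hrl1 : r ≤ r * (l - 1) := Nat.le_mul_of_pos_right r (by omega)
  have key2 : j' * K + k * (r * l + 1 - (j' + 1)) = (j' * q + l) * (r * k) := by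
    have hjl : j' + 1 ≤ r * l + 1 := by omega
    simp only [hK]
    zify [hjl]
    ring
  have key1 : j' * K + k * (r * (l - 1) + 1 - (j' + 1))
      = (j' * q + (l - 1)) * (r * k) := by
    have hjl : j' + 1 ≤ r * (l - 1) + 1 := by omega
    have hl' : 1 ≤ l := by omega
    simp only [hK]
    zify [hjl, hl']
    ring
  intro i hi1 hi2
  -- abbreviations
  have hX2 : i ≤ ((Finset.Icc 1 K).filter (fun i' => T i' (j' + 1) ≤ j' * q + l)).card := by
    omega
  have hX1 : ((Finset.Icc 1 K).filter
      (fun i' => T i' (j' + 1) ≤ j' * q + (l - 1))).card < i := by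
    omega
  have hi0 : 1 ≤ i := by omega
  have hiK : i ≤ K := by
    have hcl := Finset.card_filter_le (Finset.Icc 1 K)
      (fun i' => T i' (j' + 1) ≤ j' * q + l)
    rw [Nat.card_Icc] at hcl
    omega
  have hT_le : T i (j' + 1) ≤ j' * q + l :=
    (hseg (j' + 1) (by omega) (by omega) (j' * q + l) i hi0 hiK).2 hX2
  have hT_gt : ¬ T i (j' + 1) ≤ j' * q + (l - 1) := by
    intro h
    have := (hseg (j' + 1) (by omega) (by omega) (j' * q + (l - 1)) i hi0 hiK).1 h
    omega
  omega
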